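/- Strict dual feasibility implies exclusion: let L : ℝ^q → ℝ be convex and differentiable and λ > 0. If a minimizer θ̂ of L(θ) + λ‖θ‖₂ exists and ‖∇L(0)‖₂ < λ, then θ = 0 is a minimizer; moreover if L is strictly convex then the minimizer is unique and equals 0. -/

import Mathlib

/-- First-order condition for a convex differentiable function on an inner
product space: `L 0 + ⟪∇L 0, θ⟫ ≤ L θ`. -/
lemma convex_grad_le {q : ℕ} (L : EuclideanSpace ℝ (Fin q) → ℝ)
    (hconv : ConvexOn ℝ Set.univ L) (hdiff : Differentiable ℝ L)
    (θ : EuclideanSpace ℝ (Fin q)) :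
    L 0 + inner ℝ (gradient L 0) θ ≤ L θ := by
  set φ : ℝ → ℝ := fun t => L (t • θ) with hφ
  have hA : ConvexOn ℝ Set.univ φ := by
    have := hconv.comp_affineMap (LinearMap.toSpanSingleton ℝ _ θ).toAffineMap
    simpa [Function.comp_def, LinearMap.toSpanSingleton_apply] using this
  have hg : HasGradientAt L (gradient L 0) 0 := (hdiff 0).hasGradientAt
  have hF : HasFDerivAt L ((InnerProductSpace.toDual ℝ _) (gradient L 0)) 0 := hg
  have hsm : HasDerivAt (fun t : ℝ => t • θ) θ 0 := by
    simpa using (hasDerivAt_id (0 : ℝ)).smul_const θ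
  have hd : HasDerivAt φ (inner ℝ (gradient L 0) θ) 0 := by
    have hF' : HasFDerivAt L ((InnerProductSpace.toDual ℝ _) (gradient L 0)) ((0:ℝ) • θ) := by
      simpa using hF
    have := hF'.comp_hasDerivAt (x := (0 : ℝ)) hsm
    simpa [hφ, Function.comp_def, InnerProductSpace.toDual_apply_apply] using this
  have hslope := hA.le_slope_of_hasDerivAt (Set.mem_univ (0 : ℝ))
      (Set.mem_univ (1 : ℝ)) one_pos hd
  have : inner ℝ (gradient L 0) θ ≤ L θ - L 0 := by
    simpa [slope, hφ] using hslope
  linarith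

/-- Strict dual feasibility implies exclusion: if L is convex and
differentiable, λ > 0, a minimizer of F(θ) = L(θ) + λ‖θ‖ exists, and
‖∇L(0)‖ < λ, then 0 is a minimizer of F; moreover, if L is strictly convex
then every minimizer of F equals 0. -/
theorem strict_dual_feasibility_exclusion {q : ℕ}
    (L : EuclideanSpace ℝ (Fin q) → ℝ)
    (hconv : ConvexOn ℝ Set.univ L)
    (hdiff : Differentiable ℝ L)
    (lam : ℝ) (hlam : 0 < lam)
    (hmin : ∃ θhat : EuclideanSpace ℝ (Fin q),
      ∀ θ, L θhat + lam * ‖θhat‖ ≤ L θ + lam * ‖θ‖)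
    (hdual : ‖gradient L 0‖ < lam) :
    (∀ θ : EuclideanSpace ℝ (Fin q), L 0 + lam * ‖(0 : EuclideanSpace ℝ (Fin q))‖
        ≤ L θ + lam * ‖θ‖) ∧
    (StrictConvexOn ℝ Set.univ L →
      ∀ θ : EuclideanSpace ℝ (Fin q),
        (∀ θ', L θ + lam * ‖θ‖ ≤ L θ' + lam * ‖θ'‖) → θ = 0) := by
  have h0 : ∀ θ : EuclideanSpace ℝ (Fin q),
      L 0 + lam * ‖(0 : EuclideanSpace ℝ (Fin q))‖ ≤ L θ + lam * ‖θ‖ := by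
    intro θ
    have h1 := convex_grad_le L hconv hdiff θ
    have h2 : -(inner ℝ (gradient L 0) θ : ℝ) ≤ ‖gradient L 0‖ * ‖θ‖ := by
      have := abs_real_inner_le_norm (gradient L 0) θ
      have := neg_abs_le (inner ℝ (gradient L 0) θ : ℝ)
      nlinarith [abs_real_inner_le_norm (gradient L 0) θ,
        neg_abs_le (inner ℝ (gradient L 0) θ : ℝ)]
    have h3 : ‖gradient L 0‖ * ‖θ‖ ≤ lam * ‖θ‖ :=
      mul_le_mul_of_nonneg_right hdual.le (norm_nonneg θ)
    simp only [norm_zero, mul_zero, add_zero]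
    linarith
  refine ⟨h0, fun hs θ hθmin => ?_⟩
  by_contra hne
  have hθ0 : L θ + lam * ‖θ‖ = L 0 + lam * ‖(0 : EuclideanSpace ℝ (Fin q))‖ :=
    le_antisymm (hθmin 0) (h0 θ)
  have hmid := hs.2 (Set.mem_univ (0 : EuclideanSpace ℝ (Fin q))) (Set.mem_univ θ)
      (Ne.symm hne) (by norm_num : (0:ℝ) < 1/2) (by norm_num : (0:ℝ) < 1/2)
      (by norm_num)
  have hmid' : L ((1/2 : ℝ) • θ) < (1/2) * L 0 + (1/2) * L θ := by
    simpa [smul_zero] using hmid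
  have hnorm : ‖(1/2 : ℝ) • θ‖ = (1/2) * ‖θ‖ := by
    rw [norm_smul]; norm_num
  have hlt : L ((1/2 : ℝ) • θ) + lam * ‖(1/2 : ℝ) • θ‖
      < L 0 + lam * ‖(0 : EuclideanSpace ℝ (Fin q))‖ := by
    rw [hnorm]
    simp only [norm_zero, mul_zero, add_zero]
    have : L θ + lam * ‖θ‖ = L 0 := by simpa using hθ0
    nlinarith
  exact absurd (h0 ((1/2 : ℝ) • θ)) (not_le.mpr hlt)
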